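/- arXiv:2407.01988 — 3 statements merged into one kernel-verified Lean document; each statement's English description precedes it below -/
import Mathlib

section
/- Let X be a type, let n be a natural number, and let f be a bijection of the set of n-tuples X^n = (Fin n → X) which is equivariant for the coordinate-permutation action of the symmetric group, i.e. f(v ∘ σ) = f(v) ∘ σ for every permutation σ of Fin n and every tuple v. Then f preserves the coincidence pattern of coordinates: for every tuple v and all indices i, j, one has f(v)(i) = f(v)(j) if and only if v(i) = v(j). In particular f preserves the multiplicity type (the partition recording the sizes of the blocks of equal coordinates) of every tuple. -/
lemma comp_swap_eq_self_iff {X : Type*} {n : ℕ} (w : Fin n → X) (i j : Fin n) :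
    w ∘ Equiv.swap i j = w ↔ w i = w j := by
  constructor
  · intro h
    have := congrFun h i
    simpa [Equiv.swap_apply_left] using this.symm
  · intro h
    funext k
    rcases eq_or_ne k i with rfl | hi
    · simpa [Equiv.swap_apply_left] using h.symm
    rcases eq_or_ne k j with rfl | hj
    · simpa [Equiv.swap_apply_right] using h
    · simp [Equiv.swap_apply_of_ne_of_ne hi hj]

/-- If `f` is a bijection of `Fin n → X` which is equivariant for the
coordinate-permutation action of the symmetric group (`f (v ∘ σ) = f v ∘ σ`), then `f`
preserves the coincidence pattern of coordinates: `f v i = f v j ↔ v i = v j`. -/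
theorem equivariant_bijection_preserves_coincidence (X : Type*) (n : ℕ)
    (f : (Fin n → X) ≃ (Fin n → X))
    (hf : ∀ (σ : Equiv.Perm (Fin n)) (v : Fin n → X), f (v ∘ σ) = f v ∘ σ)
    (v : Fin n → X) (i j : Fin n) :
    f v i = f v j ↔ v i = v j := by
  rw [← comp_swap_eq_self_iff (f v) i j, ← hf (Equiv.swap i j) v,
    f.apply_eq_iff_eq, comp_swap_eq_self_iff]
end

section
/- Let d, f, a, c be integers satisfying d² − 2f² = 1, a² − 2c² = −2, and dc − af = 1. Then a = 2f and c = d. -/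
lemma aux_descent : ∀ n : ℕ, ∀ x y : ℤ, y.natAbs ≤ n → x ^ 2 = 2 * y ^ 2 → y = 0 := by
  intro n
  induction n using Nat.strong_induction_on with
  | _ n ih =>
    intro x y hle hxy
    by_contra hy
    have h2x : (2 : ℤ) ∣ x := by
      have : (2 : ℤ) ∣ x ^ 2 := ⟨y ^ 2, hxy⟩
      exact Int.Prime.dvd_pow' (by norm_num) this
    obtain ⟨k, rfl⟩ := h2x
    have hyk : y ^ 2 = 2 * k ^ 2 := by ring_nf at hxy ⊢; linarith
    have hk : k ≠ 0 := by
      rintro rfl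
      simp at hyk
      exact hy (by nlinarith [sq_nonneg y])
    have hlt : k.natAbs < y.natAbs := by
      have h1 : k.natAbs ^ 2 < y.natAbs ^ 2 := by
        have := hyk
        zify
        simp only [sq_abs]
        have hk2 : 0 < k ^ 2 := by positivity
        nlinarith
      exact lt_of_pow_lt_pow_left₀ 2 (Nat.zero_le _) h1
    have : k = 0 := ih k.natAbs (lt_of_lt_of_le hlt hle) y k le_rfl hyk
    exact hk this

lemma aux_sq (x y : ℤ) (h : x ^ 2 = 2 * y ^ 2) : x = 0 ∧ y = 0 := by
  have hy : y = 0 := aux_descent y.natAbs x y le_rfl h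
  subst hy
  simp at h
  exact ⟨by nlinarith [sq_nonneg x], rfl⟩

/-- If integers `d, f, a, c` satisfy `d² - 2f² = 1`, `a² - 2c² = -2`, and
`dc - af = 1`, then `a = 2f` and `c = d`. -/
theorem pell_matrix_det_one (d f a c : ℤ) (h1 : d ^ 2 - 2 * f ^ 2 = 1)
    (h2 : a ^ 2 - 2 * c ^ 2 = -2) (h3 : d * c - a * f = 1) :
    a = 2 * f ∧ c = d := by
  have key : (a - 2 * f) ^ 2 = 2 * (c - d) ^ 2 := by nlinarith
  obtain ⟨h4, h5⟩ := aux_sq _ _ key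
  constructor <;> linarith
end

section
/- Let d, f, a, c be integers satisfying d² − 2f² = 1, a² − 2c² = −2, and dc − af = −1. Then a = −2f and c = −d. -/
/-- If integers `d, f, a, c` satisfy `d² - 2f² = 1`, `a² - 2c² = -2`, and
`dc - af = -1`, then `a = -2f` and `c = -d`. -/
theorem pell_matrix_det_neg_one (d f a c : ℤ) (h1 : d ^ 2 - 2 * f ^ 2 = 1)
    (h2 : a ^ 2 - 2 * c ^ 2 = -2) (h3 : d * c - a * f = -1) :
    a = -(2 * f) ∧ c = -d := by
  have key : (d * a - 2 * f * c) ^ 2 = 0 := by nlinarith [sq_nonneg (d*a - 2*f*c)]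
  have k : d * a - 2 * f * c = 0 := pow_eq_zero_iff (n := 2) (by norm_num) |>.mp key
  have hu : a + 2 * f = 0 := by
    have h5 : (d ^ 2 - 2 * f ^ 2) * (a + 2 * f) = 0 := by
      linear_combination d * k + 2 * f * h3 + 2 * f * h1
    rw [h1] at h5; linarith
  have hv : c + d = 0 := by
    have h6 : (d ^ 2 - 2 * f ^ 2) * (c + d) = 0 := by
      linear_combination d * h3 + f * k + d * h1
    rw [h1] at h6; linarith
  constructor <;> linarith
end
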